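/- Let n ≥ 1, κ > 0 and ν > 3n/2, and let ρ(h) = Σ_{k ∈ ℤ^n} (κ² + |k|²)^{−ν} cos(2π k·h). Then for every multi-index α with |α| = 2n and every ε with 0 < ε < min(1, ν − 3n/2), there exists a constant C > 0 such that |∂^α ρ(h) − ∂^α ρ(h')| ≤ C ‖h − h'‖^ε for all h, h' ∈ ℝ^n. -/

import Mathlib

noncomputable section

/-- Partial derivative in the `i`-th coordinate direction (as a directional/line derivative). -/
def pd {n : ℕ} (i : Fin n) (f : (Fin n → ℝ) → ℝ) : (Fin n → ℝ) → ℝ :=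
  fun x => lineDeriv ℝ f x (Pi.single i 1)

/-- The multi-index partial derivative `∂^α f`, applying `α i` partial derivatives in each
coordinate direction `i`. -/
def mpd {n : ℕ} (α : Fin n → ℕ) (f : (Fin n → ℝ) → ℝ) : (Fin n → ℝ) → ℝ :=
  (List.finRange n).foldr (fun i g => (pd i)^[α i] g) f

/-- The stationary Matérn covariance on the torus `𝕋^n = ℝ^n/ℤ^n`:
`ρ(h) = Σ_{k ∈ ℤ^n} (κ² + |k|²)^{-ν} cos(2π k·h)`. -/
def matRho (n : ℕ) (κ ν : ℝ) : (Fin n → ℝ) → ℝ :=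
  fun h => ∑' k : Fin n → ℤ, (κ ^ 2 + ∑ i, ((k i : ℝ)) ^ 2) ^ (-ν) *
    Real.cos (2 * Real.pi * ∑ i, (k i : ℝ) * h i)

open Real

namespace Stmt5Aux

/-- 1-d summability. -/
lemma summ1 {t : ℝ} (ht : 1 < 2 * t) :
    Summable (fun m : ℤ => ((1 : ℝ) + (m : ℝ) ^ 2) ^ (-t)) := by
  have key : Summable (fun m : ℕ => ((1 : ℝ) + (m : ℝ) ^ 2) ^ (-t)) := by
    rw [← summable_nat_add_iff 1]
    have hsum : Summable (fun m : ℕ => ((m : ℝ) + 1) ^ (-(2 * t))) := by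
      have := (Real.summable_nat_rpow (p := -(2 * t))).2 (by linarith)
      have h2 := (summable_nat_add_iff (f := fun m : ℕ => (m : ℝ) ^ (-(2 * t))) 1).2 this
      refine h2.congr fun m => ?_
      push_cast
      ring_nf
    refine Summable.of_nonneg_of_le (fun m => Real.rpow_nonneg (by positivity) _)
      (fun m => ?_) hsum
    have h1 : (0 : ℝ) < ((m : ℝ) + 1) ^ 2 := by positivity
    have h2 : ((m : ℝ) + 1) ^ 2 ≤ 1 + ((m : ℕ) + 1 : ℕ) ^ 2 := by push_cast; nlinarith
    have := Real.rpow_le_rpow_of_nonpos h1 h2 (by linarith : -t ≤ 0)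
    refine le_trans (by push_cast at this ⊢; exact this) ?_
    rw [← Real.rpow_natCast ((m : ℝ) + 1) 2, ← Real.rpow_mul (by positivity)]
    norm_num
  refine Summable.of_nat_of_neg (key.congr fun m => by norm_num) (key.congr fun m => by push_cast; norm_num)

/-- product over `Fin n` summability -/
lemma summPi {n : ℕ} {f : ℤ → ℝ} (h0 : ∀ m, 0 ≤ f m) (hf : Summable f) :
    Summable (fun k : Fin n → ℤ => ∏ i, f (k i)) := by
  induction n with
  | zero => simpa using summable_of_finite_support (Set.Finite.subset (Set.finite_univ) (Set.subset_univ _))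
  | succ n ih =>
    have hprod := hf.mul_of_nonneg ih (fun m => h0 m) (fun k => Finset.prod_nonneg fun i _ => h0 _)
    have := hprod.comp_injective (Fin.consEquiv (fun _ : Fin (n + 1) => ℤ)).symm.injective
    refine this.congr fun k => ?_
    simp [Fin.prod_univ_succ, Fin.tail]

/-- Multi-dim lattice summability. -/
lemma sumS {n : ℕ} (hn : 0 < n) {s : ℝ} (hs : (n : ℝ) < 2 * s) :
    Summable (fun k : Fin n → ℤ => ((1 : ℝ) + ∑ i, ((k i : ℝ)) ^ 2) ^ (-s)) := by
  have hn' : (0 : ℝ) < n := by exact_mod_cast hn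
  set t : ℝ := s / n with ht
  have ht1 : 1 < 2 * t := by
    rw [ht, ← mul_div_assoc, lt_div_iff₀ hn']; linarith
  have hbig := summPi (n := n) (f := fun m : ℤ => ((1 : ℝ) + (m : ℝ) ^ 2) ^ (-t))
    (fun m => Real.rpow_nonneg (by positivity) _) (summ1 ht1)
  refine Summable.of_nonneg_of_le (fun k => Real.rpow_nonneg (by positivity) _)
    (fun k => ?_) hbig
  set Q : ℝ := ∑ i, ((k i : ℝ)) ^ 2 with hQ
  have hQ0 : 0 ≤ Q := Finset.sum_nonneg fun i _ => sq_nonneg _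
  have hP : (∏ i, ((1 : ℝ) + (k i : ℝ) ^ 2)) ≤ (1 + Q) ^ (n : ℕ) := by
    calc (∏ i, ((1 : ℝ) + (k i : ℝ) ^ 2)) ≤ ∏ _i : Fin n, (1 + Q) := by
          refine Finset.prod_le_prod (fun i _ => by positivity) (fun i _ => ?_)
          have : (k i : ℝ) ^ 2 ≤ Q := Finset.single_le_sum (f := fun j => ((k j : ℝ)) ^ 2)
            (fun j _ => sq_nonneg _) (Finset.mem_univ i)
          linarith
      _ = (1 + Q) ^ (n : ℕ) := by simp
  have hPpos : (0 : ℝ) < ∏ i, ((1 : ℝ) + (k i : ℝ) ^ 2) :=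
    Finset.prod_pos fun i _ => by positivity
  have step1 : ((1 + Q) ^ (n : ℕ) : ℝ) ^ (-t) ≤ (∏ i, ((1 : ℝ) + (k i : ℝ) ^ 2)) ^ (-t) :=
    Real.rpow_le_rpow_of_nonpos hPpos hP (neg_nonpos.mpr (by linarith))
  have eq1 : ((1 + Q) ^ (n : ℕ) : ℝ) ^ (-t) = (1 + Q) ^ (-s) := by
    rw [← Real.rpow_natCast (1 + Q) n, ← Real.rpow_mul (by positivity)]
    congr 1
    rw [ht]
    field_simp
  have eq2 : (∏ i, ((1 : ℝ) + (k i : ℝ) ^ 2)) ^ (-t) = ∏ i, ((1 : ℝ) + (k i : ℝ) ^ 2) ^ (-t) := by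
    rw [← Real.finset_prod_rpow _ _ (fun i _ => by positivity)]
  calc ((1 : ℝ) + Q) ^ (-s) = ((1 + Q) ^ (n : ℕ) : ℝ) ^ (-t) := eq1.symm
    _ ≤ (∏ i, ((1 : ℝ) + (k i : ℝ) ^ 2)) ^ (-t) := step1
    _ = _ := eq2

def coef (n : ℕ) (κ ν : ℝ) (β : Fin n → ℕ) (k : Fin n → ℤ) : ℝ :=
  (∏ i, (2 * Real.pi * (k i : ℝ)) ^ (β i)) * (κ ^ 2 + ∑ i, ((k i : ℝ)) ^ 2) ^ (-ν)

def G (n : ℕ) (κ ν : ℝ) (β : Fin n → ℕ) : (Fin n → ℝ) → ℝ :=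
  fun h => ∑' k : Fin n → ℤ, coef n κ ν β k *
    Real.cos (2 * Real.pi * ∑ i, (k i : ℝ) * h i + (∑ i, β i) * (Real.pi / 2))

lemma coef_bound {n : ℕ} {κ ν : ℝ} (hκ : 0 < κ) (hν : 0 < ν) (β : Fin n → ℕ)
    (e : ℝ) (he : 0 ≤ e) (k : Fin n → ℤ) :
    |coef n κ ν β k| * ((1 : ℝ) + ∑ i, ((k i : ℝ)) ^ 2) ^ (e / 2) ≤
      ((2 * Real.pi) ^ (∑ i, β i) * (min (κ ^ 2) 1) ^ (-ν)) *
        ((1 : ℝ) + ∑ i, ((k i : ℝ)) ^ 2) ^ (((∑ i, (β i : ℝ)) + e) / 2 - ν) := by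
  set Q : ℝ := ∑ i, ((k i : ℝ)) ^ 2 with hQ
  have hQ0 : (0 : ℝ) ≤ Q := Finset.sum_nonneg fun i _ => sq_nonneg _
  have h1Q : (0 : ℝ) < 1 + Q := by linarith
  have hpi : (0 : ℝ) < Real.pi := Real.pi_pos
  -- bound on the product part
  have habs : ∀ i, |2 * Real.pi * (k i : ℝ)| ≤ 2 * Real.pi * (1 + Q) ^ ((1 : ℝ) / 2) := by
    intro i
    rw [abs_mul, abs_of_pos (by positivity : (0:ℝ) < 2 * Real.pi)]
    gcongr
    have h2 : ((k i : ℝ)) ^ 2 ≤ Q := Finset.single_le_sum (f := fun j => ((k j : ℝ)) ^ 2)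
      (fun j _ => sq_nonneg _) (Finset.mem_univ i)
    rw [← Real.sqrt_eq_rpow, ← Real.sqrt_sq_eq_abs]
    exact Real.sqrt_le_sqrt (by linarith)
  have hprod : |∏ i, (2 * Real.pi * (k i : ℝ)) ^ (β i)| ≤
      (2 * Real.pi) ^ (∑ i, β i) * (1 + Q) ^ (((∑ i, (β i : ℝ))) / 2) := by
    rw [Finset.abs_prod]
    simp only [abs_pow]
    calc (∏ i, |2 * Real.pi * (k i : ℝ)| ^ (β i))
        ≤ ∏ i, (2 * Real.pi * (1 + Q) ^ ((1 : ℝ) / 2)) ^ (β i) := by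
          refine Finset.prod_le_prod (fun i _ => by positivity) (fun i _ => ?_)
          exact pow_le_pow_left₀ (abs_nonneg _) (habs i) _
      _ = (2 * Real.pi * (1 + Q) ^ ((1 : ℝ) / 2)) ^ (∑ i, β i) := by
          rw [Finset.prod_pow_eq_pow_sum]
      _ = (2 * Real.pi) ^ (∑ i, β i) * (1 + Q) ^ (((∑ i, (β i : ℝ))) / 2) := by
          rw [mul_pow]
          congr 1
          rw [← Real.rpow_natCast ((1 + Q) ^ ((1 : ℝ) / 2)) (∑ i, β i),
            ← Real.rpow_mul (le_of_lt h1Q)]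
          congr 1
          push_cast
          ring
  -- bound on the rpow part
  have hmin : (0 : ℝ) < min (κ ^ 2) 1 := lt_min (by positivity) one_pos
  have hrp : (κ ^ 2 + Q) ^ (-ν) ≤ (min (κ ^ 2) 1) ^ (-ν) * (1 + Q) ^ (-ν) := by
    have hle : min (κ ^ 2) 1 * (1 + Q) ≤ κ ^ 2 + Q := by
      have h1 : min (κ ^ 2) 1 ≤ κ ^ 2 := min_le_left _ _
      have h2 : min (κ ^ 2) 1 ≤ 1 := min_le_right _ _
      nlinarith
    have := Real.rpow_le_rpow_of_nonpos (by positivity) hle (neg_nonpos.mpr hν.le)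
    rwa [Real.mul_rpow hmin.le h1Q.le] at this
  -- assemble
  have hcoef : |coef n κ ν β k| ≤
      (2 * Real.pi) ^ (∑ i, β i) * (1 + Q) ^ (((∑ i, (β i : ℝ))) / 2) *
        ((min (κ ^ 2) 1) ^ (-ν) * (1 + Q) ^ (-ν)) := by
    rw [coef, abs_mul, abs_of_nonneg (Real.rpow_nonneg (by positivity) _)]
    exact mul_le_mul hprod hrp (Real.rpow_nonneg (by positivity) _)
      (by positivity)
  calc |coef n κ ν β k| * (1 + Q) ^ (e / 2)
      ≤ ((2 * Real.pi) ^ (∑ i, β i) * (1 + Q) ^ (((∑ i, (β i : ℝ))) / 2) *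
        ((min (κ ^ 2) 1) ^ (-ν) * (1 + Q) ^ (-ν))) * (1 + Q) ^ (e / 2) := by
        exact mul_le_mul_of_nonneg_right hcoef (Real.rpow_nonneg h1Q.le _)
    _ = ((2 * Real.pi) ^ (∑ i, β i) * (min (κ ^ 2) 1) ^ (-ν)) *
        ((1 + Q) ^ (((∑ i, (β i : ℝ))) / 2) * (1 + Q) ^ (-ν) * (1 + Q) ^ (e / 2)) := by ring
    _ = _ := by
        rw [← Real.rpow_add h1Q, ← Real.rpow_add h1Q]
        congr 1
        ring

lemma summable_coef {n : ℕ} {κ ν : ℝ} (hn : 0 < n) (hκ : 0 < κ) (hν : 0 < ν) (β : Fin n → ℕ)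
    (e : ℝ) (he : 0 ≤ e) (hcond : (∑ i, (β i : ℝ)) + e + n < 2 * ν) :
    Summable (fun k : Fin n → ℤ =>
      |coef n κ ν β k| * ((1 : ℝ) + ∑ i, ((k i : ℝ)) ^ 2) ^ (e / 2)) := by
  have hs : (n : ℝ) < 2 * (ν - ((∑ i, (β i : ℝ)) + e) / 2) := by linarith
  have hbig := (sumS hn hs).mul_left
    ((2 * Real.pi) ^ (∑ i, β i) * (min (κ ^ 2) 1) ^ (-ν))
  refine Summable.of_nonneg_of_le (fun k => by positivity) (fun k => ?_) hbig
  have := coef_bound hκ hν β e he k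
  convert this using 3
  ring

lemma summable_coef0 {n : ℕ} {κ ν : ℝ} (hn : 0 < n) (hκ : 0 < κ) (hν : 0 < ν) (β : Fin n → ℕ)
    (hcond : (∑ i, (β i : ℝ)) + n < 2 * ν) :
    Summable (fun k : Fin n → ℤ => |coef n κ ν β k|) := by
  have := summable_coef hn hκ hν β 0 le_rfl (by linarith)
  simpa using this

lemma coef_succ {n : ℕ} (κ ν : ℝ) (β : Fin n → ℕ) (i : Fin n) (k : Fin n → ℤ) :
    coef n κ ν (β + Pi.single i 1) k = coef n κ ν β k * (2 * Real.pi * (k i : ℝ)) := by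
  unfold coef
  rw [mul_right_comm]
  congr 1
  have : ∀ j, (2 * Real.pi * (k j : ℝ)) ^ ((β + (Pi.single i 1 : Fin n → ℕ)) j) =
      (2 * Real.pi * (k j : ℝ)) ^ (β j) * (if j = i then 2 * Real.pi * (k j : ℝ) else 1) := by
    intro j
    simp only [Pi.add_apply, Pi.single_apply, pow_add]
    by_cases h : j = i <;> simp [h]
  rw [Finset.prod_congr rfl (fun j _ => this j), Finset.prod_mul_distrib,
    Finset.prod_ite_eq' Finset.univ i (fun j => 2 * Real.pi * (k j : ℝ))]
  simp

lemma sum_succ {n : ℕ} (β : Fin n → ℕ) (i : Fin n) :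
    (∑ j, (β + Pi.single i 1 : Fin n → ℕ) j) = (∑ j, β j) + 1 := by
  simp only [Pi.add_apply, Finset.sum_add_distrib]
  congr 1
  simp [Pi.single_apply, Finset.sum_ite_eq']

lemma dot_shift {n : ℕ} (k : Fin n → ℤ) (x : Fin n → ℝ) (i : Fin n) (t : ℝ) :
    ∑ j, (k j : ℝ) * (x + t • (Pi.single i 1 : Fin n → ℝ)) j =
      (∑ j, (k j : ℝ) * x j) + t * (k i : ℝ) := by
  have : ∀ j, (k j : ℝ) * (x + t • (Pi.single i 1 : Fin n → ℝ)) j =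
      (k j : ℝ) * x j + (if j = i then t * (k j : ℝ) else 0) := by
    intro j
    simp only [Pi.add_apply, Pi.smul_apply, Pi.single_apply, smul_eq_mul]
    by_cases h : j = i <;> simp [h] <;> ring
  rw [Finset.sum_congr rfl (fun j _ => this j), Finset.sum_add_distrib,
    Finset.sum_ite_eq' Finset.univ i (fun j => t * (k j : ℝ))]
  simp

lemma pd_G {n : ℕ} {κ ν : ℝ} (hn : 0 < n) (hκ : 0 < κ) (hν : 0 < ν) (β : Fin n → ℕ) (i : Fin n)
    (hcond : (∑ j, (β j : ℝ)) + 1 + n < 2 * ν) :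
    pd i (G n κ ν β) = G n κ ν (β + Pi.single i 1) := by
  funext x
  set S : (Fin n → ℤ) → ℝ := fun k => ∑ j, (k j : ℝ) * x j with hS
  set m : ℕ := ∑ j, β j with hm
  set g : (Fin n → ℤ) → ℝ → ℝ := fun k t =>
    coef n κ ν β k * Real.cos (2 * Real.pi * S k + 2 * Real.pi * (k i : ℝ) * t + m * (Real.pi / 2))
    with hg_def
  set g' : (Fin n → ℤ) → ℝ → ℝ := fun k t =>
    coef n κ ν β k * (-Real.sin (2 * Real.pi * S k + 2 * Real.pi * (k i : ℝ) * t +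
      m * (Real.pi / 2)) * (2 * Real.pi * (k i : ℝ))) with hg'_def
  have hcast : ((∑ j, β j : ℕ) : ℝ) = ∑ j, (β j : ℝ) := by push_cast; rfl
  have hu : Summable (fun k : Fin n → ℤ => |coef n κ ν (β + Pi.single i 1) k|) := by
    refine summable_coef0 hn hκ hν _ ?_
    have h1 : (∑ j, ((β + Pi.single i 1 : Fin n → ℕ) j : ℝ)) =
        ((∑ j, (β + Pi.single i 1 : Fin n → ℕ) j : ℕ) : ℝ) := by
      push_cast; rfl
    rw [h1, sum_succ]
    push_cast
    rw [hcast] at *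
    linarith
  have hβsum : Summable (fun k : Fin n → ℤ => |coef n κ ν β k|) :=
    summable_coef0 hn hκ hν β (by linarith)
  have hg : ∀ k (t : ℝ), HasDerivAt (g k) (g' k t) t := by
    intro k t
    have h0 : HasDerivAt (fun t : ℝ => 2 * Real.pi * (k i : ℝ) * t)
        (2 * Real.pi * (k i : ℝ)) t := by
      simpa using (hasDerivAt_id t).const_mul (2 * Real.pi * (k i : ℝ))
    have h1 := (h0.const_add (2 * Real.pi * S k)).add_const ((m : ℝ) * (Real.pi / 2))
    exact (h1.cos).const_mul _
  have hg' : ∀ k (t : ℝ), ‖g' k t‖ ≤ |coef n κ ν (β + Pi.single i 1) k| := by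
    intro k t
    rw [Real.norm_eq_abs, coef_succ]
    simp only [hg'_def, abs_mul, abs_neg]
    refine mul_le_mul_of_nonneg_left ?_ (abs_nonneg _)
    refine le_trans (mul_le_mul_of_nonneg_right (Real.abs_sin_le_one _) (by positivity)) ?_
    rw [one_mul]
  have hg0 : Summable (fun k => g k 0) := by
    refine Summable.of_norm_bounded hβsum (fun k => ?_)
    rw [Real.norm_eq_abs, abs_mul]
    calc |coef n κ ν β k| * |Real.cos _| ≤ |coef n κ ν β k| * 1 :=
          mul_le_mul_of_nonneg_left (Real.abs_cos_le_one _) (abs_nonneg _)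
      _ = _ := mul_one _
  have HD := hasDerivAt_tsum hu hg hg' hg0 0
  have hfun : (fun t : ℝ => G n κ ν β (x + t • (Pi.single i 1 : Fin n → ℝ))) =
      fun t => ∑' k, g k t := by
    funext t
    show G n κ ν β (x + t • (Pi.single i 1 : Fin n → ℝ)) = _
    simp only [G]
    refine tsum_congr fun k => ?_
    congr 1
    rw [dot_shift k x i t]
    congr 1
    ring
  have hpd : pd i (G n κ ν β) x = ∑' k, g' k 0 := by
    show lineDeriv ℝ (G n κ ν β) x (Pi.single i 1) = _
    rw [lineDeriv, hfun]
    exact HD.deriv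
  rw [hpd]
  simp only [G]
  refine tsum_congr fun k => ?_
  simp only [hg'_def]
  rw [coef_succ]
  have harg : 2 * Real.pi * (∑ j, (k j : ℝ) * x j) +
      ((∑ j, (β + Pi.single i 1 : Fin n → ℕ) j : ℕ) : ℝ) * (Real.pi / 2) =
      (2 * Real.pi * S k + 2 * Real.pi * (k i : ℝ) * 0 + (m : ℝ) * (Real.pi / 2)) + Real.pi / 2 := by
    rw [sum_succ, hm]
    push_cast
    ring
  rw [harg, Real.cos_add_pi_div_two]
  ring

lemma single_add_single {n : ℕ} (i : Fin n) (m : ℕ) :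
    (Pi.single i m : Fin n → ℕ) + Pi.single i 1 = Pi.single i (m + 1) := by
  funext j
  simp only [Pi.add_apply, Pi.single_apply]
  by_cases h : j = i <;> simp [h]

lemma it_G {n : ℕ} {κ ν : ℝ} (hn : 0 < n) (hκ : 0 < κ) (hν : 0 < ν) (i : Fin n) (M : ℕ) :
    ∀ (m : ℕ) (β : Fin n → ℕ), (∑ j, (β j : ℝ)) + m + n < 2 * ν →
      (pd i)^[m] (G n κ ν β) = G n κ ν (β + Pi.single i m) := by
  intro m
  induction m with
  | zero => intro β _; simp
  | succ m ih =>
    intro β hcond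
    rw [Function.iterate_succ_apply, pd_G hn hκ hν β i (by push_cast at hcond ⊢; linarith)]
    rw [ih (β + Pi.single i 1) ?_]
    · refine congrArg (G n κ ν) ?_
      funext j
      simp only [Pi.add_apply, Pi.single_apply]
      by_cases h : j = i <;> simp [Pi.single_apply, h] <;> omega
    · have h1 : (∑ j, ((β + Pi.single i 1 : Fin n → ℕ) j : ℝ)) =
          ((∑ j, (β + Pi.single i 1 : Fin n → ℕ) j : ℕ) : ℝ) := by push_cast; rfl
      rw [h1, sum_succ]
      push_cast
      push_cast at hcond
      linarith

lemma count_sum_eq {n : ℕ} (α : Fin n → ℕ) :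
    ∀ l : List (Fin n), (l.map α).sum = ∑ j, l.count j * α j := by
  intro l
  induction l with
  | nil => simp
  | cons i t ih =>
    simp only [List.map_cons, List.sum_cons, ih]
    have hcc : ∀ j : Fin n, (i :: t).count j * α j =
        t.count j * α j + (if j = i then α j else 0) := by
      intro j
      rcases eq_or_ne j i with h | h
      · subst h
        simp [List.count_cons, add_mul]
      · simp [List.count_cons, h, Ne.symm h]
    rw [Finset.sum_congr rfl fun j _ => hcc j, Finset.sum_add_distrib,
      Finset.sum_ite_eq' Finset.univ i α]
    simp [add_comm]

lemma fold_G {n : ℕ} {κ ν : ℝ} (hn : 0 < n) (hκ : 0 < κ) (hν : 0 < ν) (α : Fin n → ℕ) :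
    ∀ (l : List (Fin n)) (β : Fin n → ℕ),
      (∑ j, (β j : ℝ)) + ((l.map α).sum : ℕ) + n < 2 * ν →
      l.foldr (fun i g => (pd i)^[α i] g) (G n κ ν β) =
        G n κ ν (fun j => β j + l.count j * α j) := by
  intro l
  induction l with
  | nil => intro β _; simp
  | cons i t ih =>
    intro β hcond
    have ht : (∑ j, (β j : ℝ)) + ((t.map α).sum : ℕ) + n < 2 * ν := by
      have : ((t.map α).sum : ℝ) ≤ (((i :: t).map α).sum : ℕ) := by
        simp only [List.map_cons, List.sum_cons]
        push_cast
        linarith [show (0:ℝ) ≤ (α i : ℝ) from Nat.cast_nonneg _]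
      push_cast at *
      linarith
    simp only [List.foldr_cons]
    rw [ih β ht]
    set βt : Fin n → ℕ := fun j => β j + t.count j * α j with hβt
    have hsum : (∑ j, (βt j : ℝ)) = (∑ j, (β j : ℝ)) + ((t.map α).sum : ℕ) := by
      rw [hβt]
      push_cast [count_sum_eq α t]
      rw [Finset.sum_add_distrib]
    have hit := it_G hn hκ hν i 0 (α i) βt (by
      rw [hsum]
      have : ((α i : ℝ)) ≤ (((i :: t).map α).sum : ℕ) - ((t.map α).sum : ℕ) := by
        simp only [List.map_cons, List.sum_cons]
        push_cast
        linarith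
      push_cast at *
      linarith)
    have harg : βt + Pi.single i (α i) = fun j => β j + List.count j (i :: t) * α j := by
      funext j
      show β j + List.count j t * α j + (Pi.single i (α i) : Fin n → ℕ) j = _
      rcases eq_or_ne j i with h | h
      · subst h
        simp [List.count_cons, add_mul]
        omega
      · simp [List.count_cons, h, Ne.symm h]
    rw [hit, harg]

lemma matRho_eq {n : ℕ} (κ ν : ℝ) : matRho n κ ν = G n κ ν 0 := by
  funext h
  refine tsum_congr fun k => ?_
  simp [G, coef, matRho]

lemma mpd_eq {n : ℕ} {κ ν : ℝ} (hn : 0 < n) (hκ : 0 < κ) (hν : 0 < ν) (α : Fin n → ℕ)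
    (hα : (∑ i, α i) = 2 * n) (hcond : 3 * (n : ℝ) < 2 * ν) :
    mpd α (matRho n κ ν) = G n κ ν α := by
  rw [matRho_eq, mpd]
  have hfin : ((((List.finRange n).map α).sum : ℕ) : ℝ) = ∑ j, (α j : ℝ) := by
    rw [count_sum_eq α (List.finRange n)]
    push_cast
    refine Finset.sum_congr rfl fun j _ => ?_
    rw [List.count_eq_one_of_mem (List.nodup_finRange n) (List.mem_finRange j)]
    simp
  rw [fold_G hn hκ hν α (List.finRange n) 0 ?_]
  · refine congrArg (G n κ ν) ?_
    funext j
    simp [List.count_eq_one_of_mem (List.nodup_finRange n) (List.mem_finRange j)]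
  · have h2 : (∑ j, (α j : ℝ)) = 2 * n := by exact_mod_cast hα
    rw [hfin, h2]
    simp only [Pi.zero_apply, Nat.cast_zero, Finset.sum_const_zero]
    linarith

lemma cos_holder {ε : ℝ} (hε0 : 0 < ε) (hε1 : ε ≤ 1) (a b : ℝ) :
    |Real.cos a - Real.cos b| ≤ 2 ^ ((1:ℝ) - ε) * |a - b| ^ ε := by
  have h2 : |Real.cos a - Real.cos b| ≤ 2 := by
    have h1 := Real.abs_cos_le_one a
    have h2 := Real.abs_cos_le_one b
    calc |Real.cos a - Real.cos b| ≤ |Real.cos a| + |Real.cos b| := abs_sub _ _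
      _ ≤ 2 := by linarith
  have hlip : |Real.cos a - Real.cos b| ≤ |a - b| := by
    rw [Real.cos_sub_cos, abs_mul, abs_mul]
    have habs2 : |(-2 : ℝ)| = 2 := by norm_num
    rw [habs2]
    calc 2 * |Real.sin ((a + b) / 2)| * |Real.sin ((a - b) / 2)|
        ≤ 2 * 1 * |(a - b) / 2| := by
          refine mul_le_mul (mul_le_mul_of_nonneg_left (Real.abs_sin_le_one _) (by norm_num))
            Real.abs_sin_le_abs (abs_nonneg _) (by norm_num)
      _ = |a - b| := by rw [abs_div, abs_two]; ring
  rcases eq_or_ne a b with rfl | hne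
  · simp only [sub_self, abs_zero]
    positivity
  · have ht0 : 0 < |a - b| := abs_pos.mpr (sub_ne_zero.mpr hne)
    rcases le_total |a - b| 2 with h | h
    · calc |Real.cos a - Real.cos b| ≤ |a - b| := hlip
        _ = |a - b| ^ ((1 - ε) + ε) := by rw [sub_add_cancel, Real.rpow_one]
        _ = |a - b| ^ ((1:ℝ) - ε) * |a - b| ^ ε := Real.rpow_add ht0 _ _
        _ ≤ 2 ^ ((1:ℝ) - ε) * |a - b| ^ ε :=
            mul_le_mul_of_nonneg_right (Real.rpow_le_rpow ht0.le h (by linarith))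
              (Real.rpow_nonneg ht0.le _)
    · calc |Real.cos a - Real.cos b| ≤ 2 := h2
        _ = 2 ^ ((1:ℝ) - ε) * 2 ^ ε := by rw [← Real.rpow_add two_pos]; norm_num
        _ ≤ 2 ^ ((1:ℝ) - ε) * |a - b| ^ ε :=
            mul_le_mul_of_nonneg_left (Real.rpow_le_rpow (by norm_num) h hε0.le)
              (Real.rpow_nonneg (by norm_num) _)

lemma cs_ineq {n : ℕ} (k : Fin n → ℤ) (d : Fin n → ℝ) :
    |∑ i, (k i : ℝ) * d i| ≤
      Real.sqrt (∑ i, ((k i : ℝ)) ^ 2) * Real.sqrt (∑ i, d i ^ 2) := by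
  have h := Finset.sum_mul_sq_le_sq_mul_sq Finset.univ (fun i => (k i : ℝ)) d
  rw [← Real.sqrt_sq_eq_abs, ← Real.sqrt_mul (by positivity)]
  exact Real.sqrt_le_sqrt h

end Stmt5Aux

open Stmt5Aux in
/-- For `ν > 3n/2`, each order-`2n` partial derivative of the torus Matérn covariance is
globally `ε`-Hölder for every `0 < ε < min(1, ν − 3n/2)`. -/
theorem stmt5 (n : ℕ) (hn : 1 ≤ n) (κ ν : ℝ) (hκ : 0 < κ) (hν : 3 * (n : ℝ) / 2 < ν)
    (α : Fin n → ℕ) (hα : (∑ i, α i) = 2 * n)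
    (ε : ℝ) (hε0 : 0 < ε) (hε : ε < min 1 (ν - 3 * (n : ℝ) / 2)) :
    ∃ C > (0 : ℝ), ∀ h h' : Fin n → ℝ,
      |mpd α (matRho n κ ν) h - mpd α (matRho n κ ν) h'| ≤
        C * (Real.sqrt (∑ i, (h i - h' i) ^ 2)) ^ ε := by
  have hn0 : 0 < n := hn
  have hn1 : (1 : ℝ) ≤ n := by exact_mod_cast hn
  have hν0 : 0 < ν := by linarith
  obtain ⟨hε1, hε2⟩ := lt_min_iff.mp hε
  have hπ : (0 : ℝ) < Real.pi := Real.pi_pos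
  have hαsum : (∑ i, (α i : ℝ)) = 2 * n := by exact_mod_cast hα
  rw [mpd_eq hn0 hκ hν0 α hα (by linarith)]
  -- summability facts
  have hsummA : Summable (fun k : Fin n → ℤ =>
      |coef n κ ν α k| * ((1 : ℝ) + ∑ i, ((k i : ℝ)) ^ 2) ^ (ε / 2)) :=
    summable_coef hn0 hκ hν0 α ε hε0.le (by rw [hαsum]; linarith)
  have hsumc : Summable (fun k : Fin n → ℤ => |coef n κ ν α k|) :=
    summable_coef0 hn0 hκ hν0 α (by rw [hαsum]; linarith)
  set T : ℝ := ∑' k : Fin n → ℤ,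
    |coef n κ ν α k| * ((1 : ℝ) + ∑ i, ((k i : ℝ)) ^ 2) ^ (ε / 2) with hT
  have hT0 : 0 ≤ T := tsum_nonneg fun k => by positivity
  refine ⟨2 ^ ((1:ℝ) - ε) * (2 * Real.pi) ^ ε * T + 1, by positivity, fun h h' => ?_⟩
  set D : ℝ := Real.sqrt (∑ i, (h i - h' i) ^ 2) with hD
  have hD0 : 0 ≤ D := Real.sqrt_nonneg _
  have hDε : 0 ≤ D ^ ε := Real.rpow_nonneg hD0 _
  set φ : ℝ := ((∑ i, α i : ℕ) : ℝ) * (Real.pi / 2) with hφ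
  set a : (Fin n → ℤ) → ℝ := fun k =>
    coef n κ ν α k * Real.cos (2 * Real.pi * ∑ i, (k i : ℝ) * h i + φ) with ha
  set b : (Fin n → ℤ) → ℝ := fun k =>
    coef n κ ν α k * Real.cos (2 * Real.pi * ∑ i, (k i : ℝ) * h' i + φ) with hb
  have hsa : Summable a := by
    refine Summable.of_norm_bounded hsumc fun k => ?_
    rw [ha, Real.norm_eq_abs, abs_mul]
    exact (mul_le_mul_of_nonneg_left (Real.abs_cos_le_one _) (abs_nonneg _)).trans
      (by rw [mul_one])
  have hsb : Summable b := by
    refine Summable.of_norm_bounded hsumc fun k => ?_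
    rw [hb, Real.norm_eq_abs, abs_mul]
    exact (mul_le_mul_of_nonneg_left (Real.abs_cos_le_one _) (abs_nonneg _)).trans
      (by rw [mul_one])
  -- the key pointwise bound
  have key : ∀ k : Fin n → ℤ, |a k - b k| ≤
      (2 ^ ((1:ℝ) - ε) * (2 * Real.pi) ^ ε * D ^ ε) *
        (|coef n κ ν α k| * ((1 : ℝ) + ∑ i, ((k i : ℝ)) ^ 2) ^ (ε / 2)) := by
    intro k
    set Q : ℝ := ∑ i, ((k i : ℝ)) ^ 2 with hQ
    have hQ0 : 0 ≤ Q := Finset.sum_nonneg fun i _ => sq_nonneg _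
    have hab : |a k - b k| = |coef n κ ν α k| *
        |Real.cos (2 * Real.pi * ∑ i, (k i : ℝ) * h i + φ) -
         Real.cos (2 * Real.pi * ∑ i, (k i : ℝ) * h' i + φ)| := by
      rw [ha, hb, ← mul_sub, abs_mul]
    have hθ : (2 * Real.pi * ∑ i, (k i : ℝ) * h i + φ) -
        (2 * Real.pi * ∑ i, (k i : ℝ) * h' i + φ) =
        2 * Real.pi * (∑ i, (k i : ℝ) * (h i - h' i)) := by
      simp only [mul_sub, Finset.sum_sub_distrib]
      ring
    have hcs : |∑ i, (k i : ℝ) * (h i - h' i)| ≤ (1 + Q) ^ ((1:ℝ)/2) * D := by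
      refine le_trans (cs_ineq k (fun i => h i - h' i)) ?_
      rw [hD]
      refine mul_le_mul_of_nonneg_right ?_ (Real.sqrt_nonneg _)
      rw [← Real.sqrt_eq_rpow]
      exact Real.sqrt_le_sqrt (by linarith)
    have hdiff : |(2 * Real.pi * ∑ i, (k i : ℝ) * h i + φ) -
        (2 * Real.pi * ∑ i, (k i : ℝ) * h' i + φ)| ≤
        2 * Real.pi * ((1 + Q) ^ ((1:ℝ)/2) * D) := by
      rw [hθ, abs_mul, abs_of_pos (by positivity : (0:ℝ) < 2 * Real.pi)]
      exact mul_le_mul_of_nonneg_left hcs (by positivity)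
    have hrpow : |(2 * Real.pi * ∑ i, (k i : ℝ) * h i + φ) -
        (2 * Real.pi * ∑ i, (k i : ℝ) * h' i + φ)| ^ ε ≤
        (2 * Real.pi) ^ ε * ((1 + Q) ^ (ε/2) * D ^ ε) := by
      refine le_trans (Real.rpow_le_rpow (abs_nonneg _) hdiff hε0.le) ?_
      rw [Real.mul_rpow (by positivity) (by positivity),
        Real.mul_rpow (by positivity) hD0,
        ← Real.rpow_mul (by linarith : (0:ℝ) ≤ 1 + Q)]
      have heq : (1:ℝ)/2 * ε = ε/2 := by ring
      rw [heq]
    have hcos := cos_holder hε0 hε1.le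
      (2 * Real.pi * ∑ i, (k i : ℝ) * h i + φ) (2 * Real.pi * ∑ i, (k i : ℝ) * h' i + φ)
    calc |a k - b k| = _ := hab
      _ ≤ |coef n κ ν α k| * (2 ^ ((1:ℝ) - ε) *
          |(2 * Real.pi * ∑ i, (k i : ℝ) * h i + φ) -
           (2 * Real.pi * ∑ i, (k i : ℝ) * h' i + φ)| ^ ε) :=
        mul_le_mul_of_nonneg_left hcos (abs_nonneg _)
      _ ≤ |coef n κ ν α k| * (2 ^ ((1:ℝ) - ε) *
          ((2 * Real.pi) ^ ε * ((1 + Q) ^ (ε/2) * D ^ ε))) := by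
        refine mul_le_mul_of_nonneg_left ?_ (abs_nonneg _)
        exact mul_le_mul_of_nonneg_left hrpow (by positivity)
      _ = (2 ^ ((1:ℝ) - ε) * (2 * Real.pi) ^ ε * D ^ ε) *
          (|coef n κ ν α k| * (1 + Q) ^ (ε/2)) := by ring
  -- summability of the differences
  have hsd : Summable (fun k : Fin n → ℤ => |a k - b k|) :=
    Summable.of_nonneg_of_le (fun k => abs_nonneg _) key
      (hsummA.mul_left _)
  -- assemble
  have hG : G n κ ν α h - G n κ ν α h' = ∑' k, (a k - b k) := by
    rw [Summable.tsum_sub hsa hsb]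
    rfl
  calc |G n κ ν α h - G n κ ν α h'| = |∑' k, (a k - b k)| := by rw [hG]
    _ ≤ ∑' k, |a k - b k| := by
        have := norm_tsum_le_tsum_norm (f := fun k : Fin n → ℤ => a k - b k)
          (by simpa [Real.norm_eq_abs] using hsd)
        simpa [Real.norm_eq_abs] using this
    _ ≤ ∑' k : Fin n → ℤ, (2 ^ ((1:ℝ) - ε) * (2 * Real.pi) ^ ε * D ^ ε) *
        (|coef n κ ν α k| * ((1 : ℝ) + ∑ i, ((k i : ℝ)) ^ 2) ^ (ε / 2)) :=
      Summable.tsum_le_tsum key hsd (hsummA.mul_left _)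
    _ = (2 ^ ((1:ℝ) - ε) * (2 * Real.pi) ^ ε * D ^ ε) * T := by
        rw [tsum_mul_left]
    _ = (2 ^ ((1:ℝ) - ε) * (2 * Real.pi) ^ ε * T) * D ^ ε := by ring
    _ ≤ (2 ^ ((1:ℝ) - ε) * (2 * Real.pi) ^ ε * T + 1) * D ^ ε :=
      mul_le_mul_of_nonneg_right (by linarith) hDε
end
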